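/- Let (p_n), (q_n) be Nörlund sequences (p_0 > 0, p_n ≥ 0 for n > 0; similarly for q), with comparison coefficients (k_n) solving q_n = Σ_{j=0}^n k_j p_{n-j}. Then (N,q) includes (N,p) — every (N,p)-convergent sequence is (N,q)-convergent to the same limit — if and only if both: (R1) there is H ≥ 0 with Σ_{n=0}^m |k_{m-n}| P_n ≤ H Q_m for all m, and (R2) k_m/Q_m → 0. -/

import Mathlib

open Finset PowerSeries Filter

lemma coeff_mk_mul (a b : ℕ → ℝ) (n : ℕ) :
    (PowerSeries.coeff n) (PowerSeries.mk a * PowerSeries.mk b)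
      = ∑ j ∈ range (n+1), a j * b (n - j) := by
  rw [PowerSeries.coeff_mul, Finset.Nat.sum_antidiagonal_eq_sum_range_succ_mk]
  simp

lemma sum_range_conv_comm (a b : ℕ → ℝ) (n : ℕ) :
    ∑ j ∈ range (n+1), a (n - j) * b j = ∑ j ∈ range (n+1), a j * b (n - j) := by
  rw [← Finset.sum_range_reflect]
  apply Finset.sum_congr rfl
  intro j hj
  rw [Finset.mem_range] at hj
  have h1 : n + 1 - 1 - j = n - j := by omega
  have h2 : n - (n - j) = j := by omega
  rw [h1, h2]

lemma mk_mul_mk (a b : ℕ → ℝ) :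
    PowerSeries.mk a * PowerSeries.mk b
      = PowerSeries.mk (fun n => ∑ j ∈ range (n+1), a (n - j) * b j) := by
  ext n
  rw [coeff_mk_mul, PowerSeries.coeff_mk, sum_range_conv_comm]

lemma conv_assoc (k p q r : ℕ → ℝ)
    (hk : ∀ n, q n = ∑ j ∈ range (n + 1), k j * p (n - j)) (m : ℕ) :
    ∑ j ∈ range (m+1), q (m - j) * r j
      = ∑ n ∈ range (m+1), k (m - n) * (∑ j ∈ range (n+1), p (n - j) * r j) := by
  have hq : PowerSeries.mk q = PowerSeries.mk k * PowerSeries.mk p := by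
    ext n
    rw [coeff_mk_mul, PowerSeries.coeff_mk, hk]
  have h1 : PowerSeries.mk q * PowerSeries.mk r
      = PowerSeries.mk k * (PowerSeries.mk p * PowerSeries.mk r) := by
    rw [hq, mul_assoc]
  rw [mk_mul_mk, mk_mul_mk, mk_mul_mk] at h1
  have := congrArg (PowerSeries.coeff m) h1
  simpa [PowerSeries.coeff_mk] using this

lemma exists_solution (p t : ℕ → ℝ) (hp0 : p 0 ≠ 0) :
    ∃ r : ℕ → ℝ, ∀ n, ∑ j ∈ range (n+1), p (n - j) * r j = t n := by
  set φ : PowerSeries ℝ := PowerSeries.mk p with hφ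
  refine ⟨fun n => PowerSeries.coeff n (φ⁻¹ * PowerSeries.mk t), fun n => ?_⟩
  have hmk : PowerSeries.mk (fun n => PowerSeries.coeff n (φ⁻¹ * PowerSeries.mk t))
      = φ⁻¹ * PowerSeries.mk t := by
    ext j; rw [PowerSeries.coeff_mk]
  have h1 : φ * (φ⁻¹ * PowerSeries.mk t) = PowerSeries.mk t := by
    rw [← mul_assoc, PowerSeries.mul_inv_cancel _ (by simpa [hφ] using hp0), one_mul]
  calc ∑ j ∈ range (n+1), p (n - j) * (PowerSeries.coeff j) (φ⁻¹ * PowerSeries.mk t)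
      = PowerSeries.coeff n (φ * (φ⁻¹ * PowerSeries.mk t)) := by
        rw [hφ, ← hmk, mk_mul_mk, PowerSeries.coeff_mk]
        simp [PowerSeries.coeff_mk]
    _ = t n := by rw [h1, PowerSeries.coeff_mk]

lemma toeplitz_zero (c : ℕ → ℕ → ℝ) (ε : ℕ → ℝ) (H : ℝ)
    (hH : ∀ m, ∑ n ∈ range (m+1), |c m n| ≤ H)
    (hcol : ∀ n, Tendsto (fun m => c m n) atTop (nhds 0))
    (hε : Tendsto ε atTop (nhds 0)) :
    Tendsto (fun m => ∑ n ∈ range (m+1), c m n * ε n) atTop (nhds 0) := by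
  have hH0 : 0 ≤ H := le_trans (by positivity) (hH 0)
  rw [Metric.tendsto_atTop]
  intro δ hδ
  set δ' : ℝ := δ / (2 * (H + 1)) with hδ'def
  have hδ' : 0 < δ' := by positivity
  rw [Metric.tendsto_atTop] at hε
  obtain ⟨N, hN⟩ := hε δ' hδ'
  have hN' : ∀ n ≥ N, |ε n| < δ' := by
    intro n hn; simpa [Real.dist_eq] using hN n hn
  -- head tends to 0
  have hg : Tendsto (fun m => ∑ n ∈ range N, c m n * ε n) atTop (nhds 0) := by
    have := tendsto_finset_sum (range N)
      (fun n _ => (hcol n).mul_const (ε n))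
    simpa using this
  rw [Metric.tendsto_atTop] at hg
  obtain ⟨M, hM⟩ := hg (δ/2) (by positivity)
  refine ⟨max M N, fun m hm => ?_⟩
  have hmM : M ≤ m := le_trans (le_max_left _ _) hm
  have hmN : N ≤ m := le_trans (le_max_right _ _) hm
  have hsplit : ∑ n ∈ range (m+1), c m n * ε n
      = (∑ n ∈ range N, c m n * ε n) + ∑ n ∈ Ico N (m+1), c m n * ε n := by
    rw [range_eq_Ico, range_eq_Ico]
    exact (Finset.sum_Ico_consecutive (fun n => c m n * ε n) (Nat.zero_le N) (show N ≤ m+1 by omega)).symm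
  have htail : |∑ n ∈ Ico N (m+1), c m n * ε n| ≤ δ/2 := by
    calc |∑ n ∈ Ico N (m+1), c m n * ε n|
        ≤ ∑ n ∈ Ico N (m+1), |c m n * ε n| := Finset.abs_sum_le_sum_abs _ _
      _ ≤ ∑ n ∈ Ico N (m+1), |c m n| * δ' := by
          refine Finset.sum_le_sum fun n hn => ?_
          rw [abs_mul]
          exact mul_le_mul_of_nonneg_left
            (le_of_lt (hN' n (Finset.mem_Ico.mp hn).1)) (abs_nonneg _)
      _ = (∑ n ∈ Ico N (m+1), |c m n|) * δ' := by rw [Finset.sum_mul]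
      _ ≤ (∑ n ∈ range (m+1), |c m n|) * δ' := by
          refine mul_le_mul_of_nonneg_right ?_ (le_of_lt hδ')
          refine Finset.sum_le_sum_of_subset_of_nonneg ?_ (fun _ _ _ => abs_nonneg _)
          rw [range_eq_Ico]
          exact Finset.Ico_subset_Ico (Nat.zero_le _) le_rfl
      _ ≤ H * δ' := mul_le_mul_of_nonneg_right (hH m) (le_of_lt hδ')
      _ ≤ δ/2 := by
          rw [hδ'def, ← mul_div_assoc]
          rw [div_le_div_iff₀ (by positivity) (by norm_num)]
          nlinarith
  have hhead : |∑ n ∈ range N, c m n * ε n| < δ/2 := by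
    simpa [Real.dist_eq] using hM m hmM
  rw [Real.dist_eq, sub_zero, hsplit]
  calc |(∑ n ∈ range N, c m n * ε n) + ∑ n ∈ Ico N (m+1), c m n * ε n|
      ≤ |∑ n ∈ range N, c m n * ε n| + |∑ n ∈ Ico N (m+1), c m n * ε n| := abs_add_le _ _
    _ < δ/2 + δ/2 := by linarith
    _ = δ := by ring

lemma toeplitz_tendsto (c : ℕ → ℕ → ℝ) (t : ℕ → ℝ) (σ H : ℝ)
    (hH : ∀ m, ∑ n ∈ range (m+1), |c m n| ≤ H)
    (hcol : ∀ n, Tendsto (fun m => c m n) atTop (nhds 0))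
    (hrow : ∀ m, ∑ n ∈ range (m+1), c m n = 1)
    (ht : Tendsto t atTop (nhds σ)) :
    Tendsto (fun m => ∑ n ∈ range (m+1), c m n * t n) atTop (nhds σ) := by
  have hε : Tendsto (fun n => t n - σ) atTop (nhds 0) := by
    simpa using ht.sub_const σ
  have h0 := toeplitz_zero c (fun n => t n - σ) H hH hcol hε
  have heq : ∀ m, ∑ n ∈ range (m+1), c m n * t n
      = (∑ n ∈ range (m+1), c m n * (t n - σ)) + σ := by
    intro m
    have : ∑ n ∈ range (m+1), c m n * (t n - σ)
        = (∑ n ∈ range (m+1), c m n * t n) - (∑ n ∈ range (m+1), c m n) * σ := by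
      rw [Finset.sum_mul, ← Finset.sum_sub_distrib]
      exact Finset.sum_congr rfl fun n _ => by ring
    rw [this, hrow]; ring
  have := h0.add_const σ
  rw [zero_add] at this
  exact this.congr fun m => (heq m).symm
open ZeroAtInfty

noncomputable section

/-- Build an element of C₀(ℕ, ℝ) from a sequence tending to 0. -/
def mkC0 (f : ℕ → ℝ) (hf : Tendsto f atTop (nhds 0)) : C₀(ℕ, ℝ) :=
  { toFun := f
    continuous_toFun := continuous_of_discreteTopology
    zero_at_infty' := by rwa [cocompact_eq_atTop] }

@[simp] lemma mkC0_apply (f : ℕ → ℝ) (hf) (n : ℕ) : mkC0 f hf n = f n := rfl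

lemma C0_tendsto (x : C₀(ℕ, ℝ)) : Tendsto (fun n => x n) atTop (nhds 0) := by
  have := x.zero_at_infty'
  rwa [cocompact_eq_atTop] at this

lemma C0_abs_le_norm (x : C₀(ℕ, ℝ)) (n : ℕ) : |x n| ≤ ‖x‖ := by
  have h := x.toBCF.norm_coe_le_norm n
  rwa [ZeroAtInftyContinuousMap.norm_toBCF_eq_norm] at h

/-- The finite-row summation functional on C₀(ℕ, ℝ). -/
def rowCLM (c : ℕ → ℝ) (m : ℕ) : C₀(ℕ, ℝ) →L[ℝ] ℝ :=
  LinearMap.mkContinuous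
    { toFun := fun x => ∑ n ∈ range (m+1), c n * x n
      map_add' := fun x y => by
        simp [mul_add, Finset.sum_add_distrib]
      map_smul' := fun a x => by
        simp [Finset.mul_sum]
        ring_nf
        exact Finset.sum_congr rfl fun n _ => by ring }
    (∑ n ∈ range (m+1), |c n|)
    (fun x => by
      simp only [LinearMap.coe_mk, AddHom.coe_mk]
      calc ‖∑ n ∈ range (m+1), c n * x n‖
          ≤ ∑ n ∈ range (m+1), ‖c n * x n‖ := norm_sum_le _ _
        _ ≤ ∑ n ∈ range (m+1), |c n| * ‖x‖ := by
            refine Finset.sum_le_sum fun n _ => ?_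
            rw [norm_mul]
            exact mul_le_mul_of_nonneg_left (C0_abs_le_norm x n) (norm_nonneg _)
        _ = (∑ n ∈ range (m+1), |c n|) * ‖x‖ := by rw [Finset.sum_mul])

@[simp] lemma rowCLM_apply (c : ℕ → ℝ) (m : ℕ) (x : C₀(ℕ, ℝ)) :
    rowCLM c m x = ∑ n ∈ range (m+1), c n * x n := rfl

/-- The ℓ¹ norm of a row is at most the operator norm of the functional. -/
lemma row_l1_le_norm (c : ℕ → ℝ) (m : ℕ) :
    ∑ n ∈ range (m+1), |c n| ≤ ‖rowCLM c m‖ := by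
  set sgn : ℝ → ℝ := fun a => if a < 0 then -1 else 1 with hsgn
  have hsgn1 : ∀ a : ℝ, |sgn a| ≤ 1 := by
    intro a; by_cases h : a < 0 <;> simp [hsgn, h]
  have hsgnmul : ∀ a : ℝ, a * sgn a = |a| := by
    intro a
    by_cases h : a < 0
    · simp [hsgn, h, abs_of_neg h]
    · simp [hsgn, h, abs_of_nonneg (not_lt.mp h)]
  set f : ℕ → ℝ := fun n => if n ≤ m then sgn (c n) else 0 with hf
  have hf0 : Tendsto f atTop (nhds 0) := by
    refine Tendsto.congr' ?_ tendsto_const_nhds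
    filter_upwards [eventually_gt_atTop m] with n hn
    simp [hf, show ¬ n ≤ m by omega]
  set x : C₀(ℕ, ℝ) := mkC0 f hf0 with hx
  have hxnorm : ‖x‖ ≤ 1 := by
    rw [← ZeroAtInftyContinuousMap.norm_toBCF_eq_norm]
    refine (BoundedContinuousFunction.norm_le (by norm_num)).mpr fun n => ?_
    show ‖f n‖ ≤ 1
    by_cases h : n ≤ m
    · simpa [hf, h] using hsgn1 (c n)
    · simp [hf, h]
  have hval : rowCLM c m x = ∑ n ∈ range (m+1), |c n| := by
    rw [rowCLM_apply]
    refine Finset.sum_congr rfl fun n hn => ?_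
    rw [Finset.mem_range] at hn
    have : x n = sgn (c n) := by simp [hx, hf, show n ≤ m by omega]
    rw [this, hsgnmul]
  calc ∑ n ∈ range (m+1), |c n| = rowCLM c m x := hval.symm
    _ ≤ ‖rowCLM c m x‖ := le_abs_self _
    _ ≤ ‖rowCLM c m‖ * ‖x‖ := (rowCLM c m).le_opNorm x
    _ ≤ ‖rowCLM c m‖ * 1 := by
        exact mul_le_mul_of_nonneg_left hxnorm (norm_nonneg (rowCLM c m))
    _ = ‖rowCLM c m‖ := mul_one _

end

lemma sum_reflect' (f : ℕ → ℝ) (m : ℕ) :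
    ∑ j ∈ range (m+1), f (m - j) = ∑ j ∈ range (m+1), f j := by
  have := Finset.sum_range_reflect f (m+1)
  simpa using this

theorem norlund_inclusion_iff_riesz_conditions
    (p q k : ℕ → ℝ)
    (hp0 : 0 < p 0) (hp : ∀ n, 0 < n → 0 ≤ p n)
    (hq0 : 0 < q 0) (hq : ∀ n, 0 < n → 0 ≤ q n)
    (hk : ∀ n, q n = ∑ j ∈ Finset.range (n + 1), k j * p (n - j))
    (P Q : ℕ → ℝ)
    (hP : ∀ n, P n = ∑ i ∈ Finset.range (n + 1), p i)
    (hQ : ∀ n, Q n = ∑ i ∈ Finset.range (n + 1), q i) :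
    (∀ (r : ℕ → ℝ) (σ : ℝ),
      Filter.Tendsto
        (fun m => (∑ j ∈ Finset.range (m + 1), p (m - j) * r j) / P m)
        Filter.atTop (nhds σ) →
      Filter.Tendsto
        (fun m => (∑ j ∈ Finset.range (m + 1), q (m - j) * r j) / Q m)
        Filter.atTop (nhds σ)) ↔
    ((∃ H : ℝ, 0 ≤ H ∧
        ∀ m, ∑ n ∈ Finset.range (m + 1), |k (m - n)| * P n ≤ H * Q m) ∧
      Filter.Tendsto (fun m => k m / Q m) Filter.atTop (nhds 0)) := by
  have hpnn : ∀ i, 0 ≤ p i := by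
    intro i; cases i with
    | zero => exact hp0.le
    | succ j => exact hp _ (Nat.succ_pos j)
  have hqnn : ∀ i, 0 ≤ q i := by
    intro i; cases i with
    | zero => exact hq0.le
    | succ j => exact hq _ (Nat.succ_pos j)
  have hPpos : ∀ n, 0 < P n := by
    intro n; rw [hP]
    exact Finset.sum_pos' (fun i _ => hpnn i)
      ⟨0, Finset.mem_range.mpr (Nat.succ_pos n), hp0⟩
  have hQpos : ∀ n, 0 < Q n := by
    intro n; rw [hQ]
    exact Finset.sum_pos' (fun i _ => hqnn i)
      ⟨0, Finset.mem_range.mpr (Nat.succ_pos n), hq0⟩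
  have hQmono : Monotone Q := by
    apply monotone_nat_of_le_succ
    intro n
    rw [hQ, hQ]
    exact Finset.sum_le_sum_of_subset_of_nonneg
      (Finset.range_subset_range.mpr (by omega)) (fun i _ _ => hqnn i)
  have hP0 : P 0 = p 0 := by rw [hP]; simp
  -- identity B : row sums
  have identB : ∀ m, Q m = ∑ n ∈ range (m+1), k (m - n) * P n := by
    intro m
    have hca := conv_assoc k p q (fun _ => 1) hk m
    simp only [mul_one] at hca
    calc Q m = ∑ j ∈ range (m+1), q j := hQ m
      _ = ∑ j ∈ range (m+1), q (m - j) := (sum_reflect' q m).symm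
      _ = ∑ n ∈ range (m+1), k (m - n) * ∑ j ∈ range (n+1), p (n - j) := hca
      _ = ∑ n ∈ range (m+1), k (m - n) * P n := by
          refine Finset.sum_congr rfl fun n _ => ?_
          rw [sum_reflect' p n, ← hP n]
  constructor
  · -- necessity
    intro hinc
    have key : ∀ x : ℕ → ℝ, Tendsto x atTop (nhds 0) →
        Tendsto (fun m => (∑ n ∈ range (m+1), k (m - n) * (P n * x n)) / Q m)
          atTop (nhds 0) := by
      intro x hx
      obtain ⟨r, hr⟩ := exists_solution p (fun n => P n * x n) (ne_of_gt hp0)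
      have h1 : Tendsto (fun m => (∑ j ∈ range (m+1), p (m - j) * r j) / P m)
          atTop (nhds 0) := by
        refine Tendsto.congr (fun n => ?_) hx
        rw [hr n, mul_div_cancel_left₀ _ (ne_of_gt (hPpos n))]
      have h2 := hinc r 0 h1
      refine h2.congr fun m => ?_
      congr 1
      rw [conv_assoc k p q r hk m]
      exact Finset.sum_congr rfl fun n _ => by rw [hr n]
    constructor
    · -- R1 via Banach–Steinhaus
      set g : ℕ → (C₀(ℕ, ℝ) →L[ℝ] ℝ) :=
        fun m => rowCLM (fun n => k (m - n) * P n / Q m) m with hg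
      have hptwise : ∀ x : C₀(ℕ, ℝ), ∃ C, ∀ m, ‖g m x‖ ≤ C := by
        intro x
        have hx := C0_tendsto x
        have h := key (fun n => x n) hx
        have heq : ∀ m, g m x
            = (∑ n ∈ range (m+1), k (m - n) * (P n * x n)) / Q m := by
          intro m
          rw [hg]
          simp only [rowCLM_apply]
          rw [Finset.sum_div]
          exact Finset.sum_congr rfl fun n _ => by ring
        have h2 : Tendsto (fun m => ‖g m x‖) atTop (nhds 0) := by
          have := (h.congr fun m => (heq m).symm).norm
          simpa using this
        obtain ⟨C, hC⟩ := h2.bddAbove_range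
        exact ⟨C, fun m => hC ⟨m, rfl⟩⟩
      obtain ⟨C', hC'⟩ := banach_steinhaus hptwise
      refine ⟨max C' 0, le_max_right _ _, fun m => ?_⟩
      have hl1 : ∑ n ∈ range (m+1), |k (m - n) * P n / Q m| ≤ C' :=
        le_trans (row_l1_le_norm _ m) (hC' m)
      have habs : ∀ n, |k (m - n) * P n / Q m| = |k (m - n)| * P n / Q m := by
        intro n
        rw [abs_div, abs_mul, abs_of_pos (hPpos n), abs_of_pos (hQpos m)]
      calc ∑ n ∈ range (m+1), |k (m - n)| * P n
          = (∑ n ∈ range (m+1), |k (m - n) * P n / Q m|) * Q m := by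
            rw [Finset.sum_mul]
            refine Finset.sum_congr rfl fun n _ => ?_
            rw [habs n, div_mul_cancel₀ _ (ne_of_gt (hQpos m))]
        _ ≤ C' * Q m := mul_le_mul_of_nonneg_right hl1 (le_of_lt (hQpos m))
        _ ≤ max C' 0 * Q m :=
            mul_le_mul_of_nonneg_right (le_max_left _ _) (le_of_lt (hQpos m))
    · -- R2
      have hx0 : Tendsto (fun n : ℕ => if n = 0 then (1:ℝ) else 0) atTop (nhds 0) := by
        refine Tendsto.congr' ?_ tendsto_const_nhds
        filter_upwards [eventually_gt_atTop 0] with n hn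
        simp [show n ≠ 0 by omega]
      have h := key _ hx0
      have h' : ∀ m, ∑ n ∈ range (m+1),
          k (m - n) * (P n * (if n = 0 then (1:ℝ) else 0)) = k m * p 0 := by
        intro m
        rw [Finset.sum_eq_single 0]
        · simp [hP0]
        · intro b _ hb; simp [hb]
        · intro h0; exact absurd (Finset.mem_range.mpr (Nat.succ_pos m)) h0
      have h2 : Tendsto (fun m => k m * p 0 / Q m) atTop (nhds 0) :=
        h.congr fun m => by rw [h' m]
      have h3 := h2.mul_const (p 0)⁻¹
      rw [zero_mul] at h3
      refine h3.congr fun m => ?_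
      rw [div_mul_eq_mul_div, mul_assoc, mul_inv_cancel₀ (ne_of_gt hp0), mul_one]
  · -- sufficiency
    rintro ⟨⟨H, hH0, hR1⟩, hR2⟩ r σ hr
    set t : ℕ → ℝ := fun n => (∑ j ∈ range (n+1), p (n - j) * r j) / P n with ht
    set c : ℕ → ℕ → ℝ := fun m n => k (m - n) * P n / Q m with hc
    have hHc : ∀ m, ∑ n ∈ range (m+1), |c m n| ≤ H := by
      intro m
      have : ∑ n ∈ range (m+1), |c m n|
          = (∑ n ∈ range (m+1), |k (m - n)| * P n) / Q m := by
        rw [Finset.sum_div]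
        refine Finset.sum_congr rfl fun n _ => ?_
        rw [hc]
        rw [abs_div, abs_mul, abs_of_pos (hPpos n), abs_of_pos (hQpos m)]
      rw [this, div_le_iff₀ (hQpos m)]
      exact hR1 m
    have hcol : ∀ n, Tendsto (fun m => c m n) atTop (nhds 0) := by
      intro n
      have hsub : Tendsto (fun m : ℕ => m - n) atTop atTop :=
        tendsto_sub_atTop_nat n
      have h1 : Tendsto (fun m => |k (m - n) / Q (m - n)| * P n) atTop (nhds 0) := by
        have := ((hR2.comp hsub).abs).mul_const (P n)
        simpa using this
      refine squeeze_zero_norm (fun m => ?_) h1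
      rw [hc]
      have hQle : Q (m - n) ≤ Q m := hQmono (Nat.sub_le m n)
      calc ‖k (m - n) * P n / Q m‖
          = |k (m - n)| * P n / Q m := by
            rw [Real.norm_eq_abs, abs_div, abs_mul,
              abs_of_pos (hPpos n), abs_of_pos (hQpos m)]
        _ ≤ |k (m - n)| * P n / Q (m - n) := by
            gcongr
            · exact mul_nonneg (abs_nonneg _) (le_of_lt (hPpos n))
            · exact hQpos _
        _ = |k (m - n) / Q (m - n)| * P n := by
            rw [abs_div, abs_of_pos (hQpos _)]
            ring
    have hrow : ∀ m, ∑ n ∈ range (m+1), c m n = 1 := by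
      intro m
      rw [show ∑ n ∈ range (m+1), c m n
          = (∑ n ∈ range (m+1), k (m - n) * P n) / Q m by
        rw [Finset.sum_div]]
      rw [← identB m, div_self (ne_of_gt (hQpos m))]
    have htop := toeplitz_tendsto c t σ H hHc hcol hrow hr
    refine htop.congr fun m => ?_
    have hs : ∀ n, ∑ j ∈ range (n+1), p (n - j) * r j = P n * t n := by
      intro n
      rw [ht, ← mul_div_assoc, mul_div_cancel_left₀ _ (ne_of_gt (hPpos n))]
    calc ∑ n ∈ range (m+1), c m n * t n
        = (∑ n ∈ range (m+1), k (m - n) * (P n * t n)) / Q m := by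
          rw [Finset.sum_div]
          refine Finset.sum_congr rfl fun n _ => ?_
          rw [hc]; ring
      _ = (∑ j ∈ range (m+1), q (m - j) * r j) / Q m := by
          congr 1
          rw [conv_assoc k p q r hk m]
          exact Finset.sum_congr rfl fun n _ => by rw [hs n]
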